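/- Let p be a prime, let a_0, …, a_{p−1} be p-adic integers, and let x be a p-adic integer. Then ∑_{k=0}^{p−1} ((x)_k / k!) · a_k ≡ T_{⟨−x⟩_p} (mod p), where T_j := ∑_{k=0}^j (−1)^k C(j,k) a_k. -/

import Mathlib

theorem stmt5 (p : ℕ) [Fact p.Prime] (a : ℕ → ℤ_[p]) (x : ℤ_[p]) :
    ‖(∑ k ∈ Finset.range p,
        (↑((ascPochhammer ℤ_[p] k).eval x) : ℚ_[p]) / (Nat.factorial k : ℚ_[p]) * (a k : ℚ_[p]))
      - ((∑ k ∈ Finset.range (PadicInt.zmodRepr (-x) + 1),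
            (-1 : ℤ_[p]) ^ k * ((PadicInt.zmodRepr (-x)).choose k : ℤ_[p]) * a k : ℤ_[p]) : ℚ_[p])‖
      ≤ (p : ℝ) ^ (-1 : ℤ) := by
  have hp := (Fact.out : p.Prime)
  set r := PadicInt.zmodRepr (-x) with hr
  have hrp : r + 1 ≤ p := PadicInt.zmodRepr_lt_p (-x)
  have hdvd : (p : ℤ_[p]) ∣ (x - (-(r : ℤ_[p]))) := by
    have h := PadicInt.sub_zmodRepr_mem (-x)
    rw [PadicInt.maximalIdeal_eq_span_p, Ideal.mem_span_singleton] at h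
    have h2 := h.neg_right
    simpa [sub_neg_eq_add, neg_sub, add_comm] using h2
  have hext : (∑ k ∈ Finset.range (r + 1), (-1 : ℤ_[p]) ^ k * (r.choose k : ℤ_[p]) * a k)
      = ∑ k ∈ Finset.range p, (-1 : ℤ_[p]) ^ k * (r.choose k : ℤ_[p]) * a k := by
    refine Finset.sum_subset (Finset.range_subset_range.mpr hrp) fun k _ hk => ?_
    rw [Finset.mem_range, not_lt] at hk
    rw [Nat.choose_eq_zero_of_lt (by omega)]
    simp
  rw [hext, show ((∑ k ∈ Finset.range p, (-1 : ℤ_[p]) ^ k * (r.choose k : ℤ_[p]) * a k : ℤ_[p]) : ℚ_[p]) = ∑ k ∈ Finset.range p, (((-1 : ℤ_[p]) ^ k * (r.choose k : ℤ_[p]) * a k : ℤ_[p]) : ℚ_[p]) from map_sum (PadicInt.Coe.ringHom) _ _, ← Finset.sum_sub_distrib]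
  refine IsUltrametricDist.norm_sum_le_of_forall_le_of_nonneg (by positivity) fun k hk => ?_
  rw [Finset.mem_range] at hk
  -- key identity: ((-1)^k * C(r,k) : ℤ_[p]) * k! = (ascPochhammer ℤ_[p] k).eval (-(r:ℤ_[p]))
  have hkey : (ascPochhammer ℤ_[p] k).eval (-(r : ℤ_[p]))
      = (-1 : ℤ_[p]) ^ k * (r.choose k : ℤ_[p]) * (k.factorial : ℤ_[p]) := by
    rw [ascPochhammer_eval_neg_eq_descPochhammer, descPochhammer_eval_eq_descFactorial,
      Nat.descFactorial_eq_factorial_mul_choose]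
    push_cast
    ring
  have hfac_ne : ((k.factorial : ℚ_[p])) ≠ 0 := by
    exact_mod_cast Nat.cast_ne_zero.mpr k.factorial_ne_zero
  have hfac_norm : ‖(k.factorial : ℚ_[p])‖ = 1 := by
    refine le_antisymm (by exact_mod_cast Padic.norm_int_le_one (k.factorial : ℤ)) ?_
    by_contra hlt
    push_neg at hlt
    have : (p : ℤ) ∣ (k.factorial : ℤ) := by
      have := (Padic.norm_intCast_lt_one_iff (k := (k.factorial : ℤ))).mp (by
        exact_mod_cast hlt)
      exact this
    have : p ∣ k.factorial := by exact_mod_cast this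
    have := (Nat.Prime.dvd_factorial hp).mp this
    omega
  -- rewrite the term
  have hterm : ((((ascPochhammer ℤ_[p] k).eval x : ℤ_[p]) : ℚ_[p])) / (k.factorial : ℚ_[p]) * (a k : ℚ_[p])
      - (((-1 : ℤ_[p]) ^ k * (r.choose k : ℤ_[p]) * a k : ℤ_[p]) : ℚ_[p])
      = (((ascPochhammer ℤ_[p] k).eval x - (ascPochhammer ℤ_[p] k).eval (-(r : ℤ_[p])) : ℤ_[p])
          : ℚ_[p]) / (k.factorial : ℚ_[p]) * (a k : ℚ_[p]) := by
    rw [PadicInt.coe_sub, hkey]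
    push_cast
    field_simp
  rw [hterm]
  have hdvd2 : (p : ℤ_[p]) ∣ ((ascPochhammer ℤ_[p] k).eval x
      - (ascPochhammer ℤ_[p] k).eval (-(r : ℤ_[p]))) :=
    hdvd.trans (Polynomial.sub_dvd_eval_sub _ _ _)
  obtain ⟨c, hc⟩ := hdvd2
  rw [norm_mul, norm_div, hfac_norm, div_one, hc]
  calc ‖(((p : ℤ_[p]) * c : ℤ_[p]) : ℚ_[p])‖ * ‖(a k : ℚ_[p])‖
      ≤ ‖(((p : ℤ_[p]) * c : ℤ_[p]) : ℚ_[p])‖ * 1 := by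
        refine mul_le_mul_of_nonneg_left ?_ (norm_nonneg _)
        rw [PadicInt.padic_norm_e_of_padicInt]
        exact PadicInt.norm_le_one _
    _ = ‖((p : ℤ_[p]) * c : ℤ_[p])‖ := by rw [mul_one, PadicInt.padic_norm_e_of_padicInt]
    _ ≤ (p : ℝ)⁻¹ := by
        rw [norm_mul, PadicInt.norm_p]
        calc (p : ℝ)⁻¹ * ‖c‖ ≤ (p : ℝ)⁻¹ * 1 := by
              refine mul_le_mul_of_nonneg_left (PadicInt.norm_le_one _) (by positivity)
          _ = (p : ℝ)⁻¹ := mul_one _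
    _ = (p : ℝ) ^ (-1 : ℤ) := (zpow_neg_one _).symm
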